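/- For all integers n with n ≡ 0 (mod 4) or n ≡ 1 (mod 4), the function c(k) = k + k(n-k)(n-k-1) is injective on {0, 1, ..., n}; that is, c(k) = c(m) implies k = m for all k, m in {0,...,n}. -/
import Mathlib

lemma stmt_0_aux : ∀ a b c : ZMod 8, (a = 0 ∨ a = 1 ∨ a = 4 ∨ a = 5) →
    b*b + b*c + c*c + a*a - 2*a*(b+c) - a + (b+c) + 1 ≠ 0 := by decide

/-- For all integers `n` with `n ≡ 0` or `1 (mod 4)`, the cost function
`c(k) = k + k(n-k)(n-k-1)` is injective on `{0,...,n}`. -/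
theorem stmt_0 (n : ℤ) (hn : n % 4 = 0 ∨ n % 4 = 1)
    (k m : ℤ) (hk0 : 0 ≤ k) (hkn : k ≤ n) (hm0 : 0 ≤ m) (hmn : m ≤ n)
    (h : k + k * (n - k) * (n - k - 1) = m + m * (n - m) * (n - m - 1)) :
    k = m := by
  have key : (k - m) * (k*k + k*m + m*m + n*n - 2*n*(k+m) - n + (k+m) + 1) = 0 := by
    linear_combination h
  rcases mul_eq_zero.mp key with h1 | h2
  · linarith
  · exfalso
    have hcast : (k:ZMod 8)*(k:ZMod 8) + (k:ZMod 8)*(m:ZMod 8) + (m:ZMod 8)*(m:ZMod 8)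
        + (n:ZMod 8)*(n:ZMod 8) - 2*(n:ZMod 8)*((k:ZMod 8)+(m:ZMod 8)) - (n:ZMod 8)
        + ((k:ZMod 8)+(m:ZMod 8)) + 1 = 0 := by
      have := congrArg (fun x : ℤ => (x : ZMod 8)) h2
      push_cast at this
      linear_combination this
    have hmod : ((n % 8 : ℤ) : ZMod 8) = (n : ZMod 8) := by
      conv_rhs => rw [← Int.mul_ediv_add_emod n 8]
      push_cast
      ring_nf
      rw [show (8:ZMod 8) = 0 from by decide, mul_zero, zero_add]
    have hn8 : n % 8 = 0 ∨ n % 8 = 1 ∨ n % 8 = 4 ∨ n % 8 = 5 := by omega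
    have hn' : (n : ZMod 8) = 0 ∨ (n : ZMod 8) = 1 ∨ (n : ZMod 8) = 4 ∨ (n : ZMod 8) = 5 := by
      rcases hn8 with h' | h' | h' | h' <;> rw [← hmod, h'] <;> simp
    exact stmt_0_aux (n : ZMod 8) (k : ZMod 8) (m : ZMod 8) hn' hcast
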